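/- In the q-deformed Bannai–Ito algebra, the element C = (q^{−1/2} − q^{3/2}) I₁I₂I₃ + q I₁² + q^{−1} I₂² + q I₃² − (1−q) ι₁ I₁ − (1−q^{−1}) ι₂ I₂ − (1−q) ι₃ I₃ commutes with I₁, I₂ and I₃. -/
import Mathlib

set_option maxHeartbeats 4000000 in
theorem key_8 {A : Type*} [Ring A] [Algebra ℂ A] (s : ℂ) (hs : s ≠ 0)
    (I₁ I₂ I₃ : A) (ι₁ ι₂ ι₃ : ℂ)
    (e21 : I₂ * I₁ = s • I₃ + (s * ι₃) • (1:A) - (s^2) • (I₁ * I₂))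
    (e32 : I₃ * I₂ = s • I₁ + (s * ι₁) • (1:A) - (s^2) • (I₂ * I₃))
    (e31 : I₃ * I₁ = s⁻¹ • I₂ + (s⁻¹ * ι₂) • (1:A) - (s⁻¹^2) • (I₁ * I₃))
    (C : A)
    (hC : C = (s⁻¹ - s^3) • (I₁ * I₂ * I₃) + (s^2) • (I₁ * I₁) + (s⁻¹^2) • (I₂ * I₂)
      + (s^2) • (I₃ * I₃) - ((1 - s^2) * ι₁) • I₁ - ((1 - s⁻¹^2) * ι₂) • I₂
      - ((1 - s^2) * ι₃) • I₃) :
    C * I₁ = I₁ * C ∧ C * I₂ = I₂ * C ∧ C * I₃ = I₃ * C := by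
  have e21' : ∀ x : A, I₂ * (I₁ * x) = s • (I₃ * x) + (s * ι₃) • x - (s^2) • (I₁ * (I₂ * x)) := by
    intro x
    rw [← mul_assoc, e21, sub_mul, add_mul, smul_mul_assoc, smul_mul_assoc, smul_mul_assoc,
      one_mul, mul_assoc]
  have e32' : ∀ x : A, I₃ * (I₂ * x) = s • (I₁ * x) + (s * ι₁) • x - (s^2) • (I₂ * (I₃ * x)) := by
    intro x
    rw [← mul_assoc, e32, sub_mul, add_mul, smul_mul_assoc, smul_mul_assoc, smul_mul_assoc,
      one_mul, mul_assoc]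
  have e31' : ∀ x : A, I₃ * (I₁ * x) = s⁻¹ • (I₂ * x) + (s⁻¹ * ι₂) • x
      - (s⁻¹^2) • (I₁ * (I₃ * x)) := by
    intro x
    rw [← mul_assoc, e31, sub_mul, add_mul, smul_mul_assoc, smul_mul_assoc, smul_mul_assoc,
      one_mul, mul_assoc]
  subst hC
  refine ⟨?_, ?_, ?_⟩ <;>
  · simp only [mul_assoc, sub_mul, add_mul, mul_sub, mul_add, smul_mul_assoc, mul_smul_comm,
      smul_add, smul_sub, smul_smul, mul_one, one_mul, e21, e21', e32, e32', e31, e31']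
    match_scalars <;> field_simp <;> ring

theorem stmt_8 (q : ℝ) (hq : 0 < q) (hq1 : q ≠ 1) {A : Type*} [Ring A] [Algebra ℂ A]
    (I₁ I₂ I₃ : A) (ι₁ ι₂ ι₃ : ℂ)
    (h12 : ((Real.sqrt q : ℝ) : ℂ) • (I₁ * I₂) + (((Real.sqrt q : ℝ) : ℂ))⁻¹ • (I₂ * I₁)
      = I₃ + ι₃ • (1 : A))
    (h23 : ((Real.sqrt q : ℝ) : ℂ) • (I₂ * I₃) + (((Real.sqrt q : ℝ) : ℂ))⁻¹ • (I₃ * I₂)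
      = I₁ + ι₁ • (1 : A))
    (h31 : ((Real.sqrt q : ℝ) : ℂ) • (I₃ * I₁) + (((Real.sqrt q : ℝ) : ℂ))⁻¹ • (I₁ * I₃)
      = I₂ + ι₂ • (1 : A))
    (C : A)
    (hC : C = (((Real.sqrt q)⁻¹ - q * Real.sqrt q : ℝ) : ℂ) • (I₁ * I₂ * I₃)
      + ((q : ℝ) : ℂ) • I₁ ^ 2 + ((q⁻¹ : ℝ) : ℂ) • I₂ ^ 2 + ((q : ℝ) : ℂ) • I₃ ^ 2
      - (((1 - q : ℝ) : ℂ) * ι₁) • I₁ - (((1 - q⁻¹ : ℝ) : ℂ) * ι₂) • I₂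
      - (((1 - q : ℝ) : ℂ) * ι₃) • I₃) :
    C * I₁ = I₁ * C ∧ C * I₂ = I₂ * C ∧ C * I₃ = I₃ * C := by
  set s : ℂ := ((Real.sqrt q : ℝ) : ℂ) with hsdef
  have hs : s ≠ 0 := Complex.ofReal_ne_zero.mpr (Real.sqrt_pos.mpr hq).ne'
  have hsq : s ^ 2 = ((q : ℝ) : ℂ) := by
    rw [hsdef, ← Complex.ofReal_pow, Real.sq_sqrt hq.le]
  have e21 : I₂ * I₁ = s • I₃ + (s * ι₃) • (1:A) - (s^2) • (I₁ * I₂) := by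
    have h : s⁻¹ • (I₂ * I₁) = I₃ + ι₃ • (1:A) - s • (I₁ * I₂) := eq_sub_of_add_eq' h12
    calc I₂ * I₁ = s • (s⁻¹ • (I₂ * I₁)) := by
          rw [smul_smul, mul_inv_cancel₀ hs, one_smul]
      _ = s • (I₃ + ι₃ • (1:A) - s • (I₁ * I₂)) := by rw [h]
      _ = _ := by module
  have e32 : I₃ * I₂ = s • I₁ + (s * ι₁) • (1:A) - (s^2) • (I₂ * I₃) := by
    have h : s⁻¹ • (I₃ * I₂) = I₁ + ι₁ • (1:A) - s • (I₂ * I₃) := eq_sub_of_add_eq' h23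
    calc I₃ * I₂ = s • (s⁻¹ • (I₃ * I₂)) := by
          rw [smul_smul, mul_inv_cancel₀ hs, one_smul]
      _ = s • (I₁ + ι₁ • (1:A) - s • (I₂ * I₃)) := by rw [h]
      _ = _ := by module
  have e31 : I₃ * I₁ = s⁻¹ • I₂ + (s⁻¹ * ι₂) • (1:A) - (s⁻¹^2) • (I₁ * I₃) := by
    have h : s • (I₃ * I₁) = I₂ + ι₂ • (1:A) - s⁻¹ • (I₁ * I₃) := eq_sub_of_add_eq h31
    calc I₃ * I₁ = s⁻¹ • (s • (I₃ * I₁)) := by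
          rw [smul_smul, inv_mul_cancel₀ hs, one_smul]
      _ = s⁻¹ • (I₂ + ι₂ • (1:A) - s⁻¹ • (I₁ * I₃)) := by rw [h]
      _ = _ := by module
  have hC' : C = (s⁻¹ - s^3) • (I₁ * I₂ * I₃) + (s^2) • (I₁ * I₁) + (s⁻¹^2) • (I₂ * I₂)
      + (s^2) • (I₃ * I₃) - ((1 - s^2) * ι₁) • I₁ - ((1 - s⁻¹^2) * ι₂) • I₂
      - ((1 - s^2) * ι₃) • I₃ := by
    rw [hC, pow_two I₁, pow_two I₂, pow_two I₃]
    push_cast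
    simp only [← hsq, ← hsdef]
    match_scalars <;> field_simp <;> (first | ring1 | tauto)
  exact key_8 s hs I₁ I₂ I₃ ι₁ ι₂ ι₃ e21 e32 e31 C hC'
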